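/- arXiv:2210.02020 — 2 statements merged into one kernel-verified Lean document; each statement's English description precedes it below -/
import Mathlib

section
/- Let ξ₁, ξ₂ be orthogonal complementary subspaces of ℝⁿ, K₁ ⊆ ξ₁, K₂ ⊆ ξ₂ convex bodies containing the origin in their relative interiors, and suppose y₁ ∈ relbd K₁ and y₂ ∈ relint K₂. If y₁ + y₂ is a boundary point of K₁ + K₂ with a unique outer unit normal, then ν_{K₁+K₂}(y₁+y₂) = ν_{K₁}(y₁), i.e., the outer unit normal lies in ξ₁ and equals the outer unit normal of K₁ at y₁ relative to ξ₁. -/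
noncomputable section

open MeasureTheory Set Metric
open scoped RealInnerProductSpace ENNReal Pointwise Classical

/-- Euclidean `n`-space. -/
abbrev E (n : ℕ) := EuclideanSpace ℝ (Fin n)

/-- The support function of a set `K ⊆ ℝⁿ`. -/
def suppFn {n : ℕ} (K : Set (E n)) (x : E n) : ℝ :=
  sSup ((fun y => ⟪y, x⟫) '' K)

/-- The Gauss map of `K`: at a boundary point with a unique outer unit normal it returns
that normal, otherwise `0`. -/
def gaussMap {n : ℕ} (K : Set (E n)) (x : E n) : E n :=
  if h : ∃! u : E n, ‖u‖ = 1 ∧ ⟪x, u⟫ = suppFn K u then h.choose else 0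

/-- The Gauss map of a convex body `K` lying in a subspace `ξ`, relative to `ξ`. -/
def relGaussMap {n : ℕ} (ξ : Submodule ℝ (E n)) (K : Set (E n)) (x : E n) : E n :=
  if h : ∃! u : E n, u ∈ ξ ∧ ‖u‖ = 1 ∧ ⟪x, u⟫ = suppFn K u then h.choose else 0

lemma inner_le_suppFn {n : ℕ} {K : Set (E n)} (hK : IsCompact K) {y : E n} (hy : y ∈ K)
    (x : E n) : ⟪y, x⟫ ≤ suppFn K x :=
  le_csSup (hK.image (continuous_id.inner continuous_const)).bddAbove ⟨y, hy, rfl⟩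

lemma suppFn_le {n : ℕ} {K : Set (E n)} (hne : K.Nonempty) {x : E n} {b : ℝ}
    (h : ∀ y ∈ K, ⟪y, x⟫ ≤ b) : suppFn K x ≤ b :=
  csSup_le (hne.image _) (by rintro _ ⟨y, hy, rfl⟩; exact h y hy)

lemma inner_eq_of_relint_max {n : ℕ} {K : Set (E n)} {z : E n}
    (hz : z ∈ intrinsicInterior ℝ K) (v : E n)
    (hmax : ∀ y ∈ K, ⟪y, v⟫ ≤ ⟪z, v⟫) {y : E n} (hy : y ∈ K) : ⟪y, v⟫ = ⟪z, v⟫ := by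
  obtain ⟨z', hz', rfl⟩ := mem_intrinsicInterior.mp hz
  obtain ⟨ε, εpos, hball⟩ := Metric.isOpen_iff.mp isOpen_interior z' hz'
  set r : ℝ := ‖(z' : E n) - y‖ with hr
  have hrnn : (0:ℝ) ≤ r := norm_nonneg _
  set t : ℝ := ε / (2 * (r + 1)) with ht
  have htpos : 0 < t := div_pos εpos (by nlinarith)
  have hmem : t • ((z' : E n) -ᵥ y) +ᵥ (z' : E n) ∈ affineSpan ℝ K :=
    AffineSubspace.smul_vsub_vadd_mem _ t z'.2 (subset_affineSpan ℝ K hy) z'.2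
  have hqK : t • ((z' : E n) -ᵥ y) +ᵥ (z' : E n) ∈ K := by
    have hball' : (⟨_, hmem⟩ : affineSpan ℝ K) ∈ ball z' ε := by
      rw [mem_ball, Subtype.dist_eq, dist_eq_norm]
      simp only [vadd_eq_add, vsub_eq_sub, add_sub_cancel_right, norm_smul,
        Real.norm_eq_abs, abs_of_pos htpos]
      calc t * r = ε * (r / (2 * (r + 1))) := by rw [ht]; ring
        _ < ε * 1 := by
            apply mul_lt_mul_of_pos_left _ εpos
            rw [div_lt_one (by nlinarith)]; nlinarith
        _ = ε := mul_one ε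
    exact (interior_subset (hball hball') :
      (⟨_, hmem⟩ : affineSpan ℝ K) ∈ Subtype.val ⁻¹' K)
  have h1 := hmax _ hqK
  simp only [vadd_eq_add, vsub_eq_sub, inner_add_left, real_inner_smul_left,
    inner_sub_left] at h1
  have h2 : ⟪(z' : E n), v⟫ ≤ ⟪y, v⟫ := by nlinarith
  exact le_antisymm (hmax y hy) h2

/-- At a point `y₁ + y₂` with `y₁ ∈ relbd K₁`, `y₂ ∈ relint K₂`, having a unique outer unit
normal, the outer unit normal of `K₁ + K₂` lies in `ξ₁` and equals the relative outer unit
normal of `K₁` at `y₁`. -/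
theorem stmt8 {n : ℕ} (ξ₁ ξ₂ : Submodule ℝ (E n)) (hperp : ξ₂ = ξ₁ᗮ)
    (K₁ K₂ : Set (E n)) (hK₁ξ : K₁ ⊆ (ξ₁ : Set (E n))) (hK₂ξ : K₂ ⊆ (ξ₂ : Set (E n)))
    (hK₁conv : Convex ℝ K₁) (hK₁comp : IsCompact K₁)
    (hK₂conv : Convex ℝ K₂) (hK₂comp : IsCompact K₂)
    (hK₁0 : (0 : E n) ∈ intrinsicInterior ℝ K₁) (hK₂0 : (0 : E n) ∈ intrinsicInterior ℝ K₂)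
    (y₁ y₂ : E n) (hy₁ : y₁ ∈ intrinsicFrontier ℝ K₁) (hy₂ : y₂ ∈ intrinsicInterior ℝ K₂)
    (hbd : y₁ + y₂ ∈ frontier (K₁ + K₂))
    (huniq : ∃! u : E n, ‖u‖ = 1 ∧ ⟪y₁ + y₂, u⟫ = suppFn (K₁ + K₂) u) :
    gaussMap (K₁ + K₂) (y₁ + y₂) ∈ ξ₁ ∧
      gaussMap (K₁ + K₂) (y₁ + y₂) = relGaussMap ξ₁ K₁ y₁ := by
  classical
  set u : E n := huniq.choose with hudef
  have hu : ‖u‖ = 1 ∧ ⟪y₁ + y₂, u⟫ = suppFn (K₁ + K₂) u := huniq.choose_spec.1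
  have huu : ∀ w : E n, (‖w‖ = 1 ∧ ⟪y₁ + y₂, w⟫ = suppFn (K₁ + K₂) w) → w = u :=
    huniq.choose_spec.2
  have hy₁K : y₁ ∈ K₁ := intrinsicFrontier_subset hK₁comp.isClosed hy₁
  have hy₂K : y₂ ∈ K₂ := intrinsicInterior_subset hy₂
  have h0₂ : (0 : E n) ∈ K₂ := intrinsicInterior_subset hK₂0
  have hK₁ne : K₁.Nonempty := ⟨y₁, hy₁K⟩
  have hsum_mem : y₁ + y₂ ∈ K₁ + K₂ := add_mem_add hy₁K hy₂K
  have hsumne : (K₁ + K₂).Nonempty := ⟨y₁ + y₂, hsum_mem⟩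
  have hsumcomp : IsCompact (K₁ + K₂) := hK₁comp.add hK₂comp
  -- maximality split
  have hA : ∀ a ∈ K₁, ⟪a, u⟫ ≤ ⟪y₁, u⟫ := by
    intro a ha
    have h := inner_le_suppFn hsumcomp (add_mem_add ha hy₂K) u
    rw [← hu.2] at h
    simp only [inner_add_left] at h
    linarith
  have hB : ∀ b ∈ K₂, ⟪b, u⟫ ≤ ⟪y₂, u⟫ := by
    intro b hb
    have h := inner_le_suppFn hsumcomp (add_mem_add hy₁K hb) u
    rw [← hu.2] at h
    simp only [inner_add_left] at h
    linarith
  -- constancy on K₂ and vanishing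
  have hC : ∀ b ∈ K₂, ⟪b, u⟫ = ⟪y₂, u⟫ := fun b hb => inner_eq_of_relint_max hy₂ u hB hb
  have hy₂0 : ⟪y₂, u⟫ = 0 := by
    have h := (hC 0 h0₂).symm
    rwa [inner_zero_left] at h
  have hC0 : ∀ b ∈ K₂, ⟪b, u⟫ = 0 := fun b hb => (hC b hb).trans hy₂0
  -- orthogonal decomposition
  set u₁ : E n := (Submodule.orthogonalProjectionOnto ξ₁ u : E n) with hu₁def
  set u₂ : E n := u - u₁ with hu₂def
  have hu₁ : u₁ ∈ ξ₁ := (Submodule.orthogonalProjectionOnto ξ₁ u).2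
  have hu₂ : u₂ ∈ ξ₁ᗮ := ξ₁.sub_starProjection_mem_orthogonal u
  have hu' : u = u₁ + u₂ := by rw [hu₂def]; abel
  have hξ₁mem₂ : ∀ a ∈ K₁, ⟪a, u₂⟫ = 0 := fun a ha =>
    (Submodule.mem_orthogonal ξ₁ u₂).1 hu₂ a (hK₁ξ ha)
  have hξ₂mem₁ : ∀ b ∈ K₂, ⟪b, u₁⟫ = 0 := by
    intro b hb
    have hb' : b ∈ ξ₁ᗮ := by rw [← hperp]; exact hK₂ξ hb
    have := (Submodule.mem_orthogonal ξ₁ b).1 hb' u₁ hu₁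
    rwa [real_inner_comm] at this
  have hξ₂mem₂ : ∀ b ∈ K₂, ⟪b, u₂⟫ = 0 := by
    intro b hb
    have h1 := hC0 b hb
    have h2 := hξ₂mem₁ b hb
    rw [hu', inner_add_right] at h1
    linarith
  have h12 : ⟪u₁, u₂⟫ = 0 := (Submodule.mem_orthogonal ξ₁ u₂).1 hu₂ u₁ hu₁
  -- the reflection u₁ - u₂ agrees with u on K₁ + K₂
  have hagree : ∀ x ∈ K₁ + K₂, ⟪x, u₁ - u₂⟫ = ⟪x, u⟫ := by
    intro x hx
    obtain ⟨a, ha, b, hb, rfl⟩ := mem_add.mp hx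
    have e1 := hξ₁mem₂ a ha
    have e2 := hξ₂mem₁ b hb
    have e3 := hξ₂mem₂ b hb
    rw [hu']
    simp only [inner_add_left, inner_add_right, inner_sub_right]
    linarith
  have hsuppeq : suppFn (K₁ + K₂) (u₁ - u₂) = suppFn (K₁ + K₂) u := by
    unfold suppFn
    congr 1
    exact image_congr hagree
  have hnormref : ‖u₁ - u₂‖ = 1 := by
    have e1 : ‖u₁ - u₂‖ ^ 2 = ‖u‖ ^ 2 := by
      rw [norm_sub_sq_real, hu', norm_add_sq_real, h12]; ring
    rw [hu.1] at e1
    have hn : (0:ℝ) ≤ ‖u₁ - u₂‖ := norm_nonneg _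
    have e2 : (‖u₁ - u₂‖ - 1) * (‖u₁ - u₂‖ + 1) = 0 := by nlinarith
    rcases mul_eq_zero.mp e2 with h | h
    · linarith
    · linarith
  have hrefl : u₁ - u₂ = u := by
    apply huu
    refine ⟨hnormref, ?_⟩
    rw [hagree _ hsum_mem, hu.2, hsuppeq]
  have hu₂0 : u₂ = 0 := by
    have h := hrefl.trans hu'
    have h2 : u₂ + u₂ = 0 := by
      have := sub_eq_zero.mpr h.symm
      rw [show u₁ + u₂ - (u₁ - u₂) = u₂ + u₂ by abel] at this
      exact this
    have h3 : (2 : ℝ) • u₂ = 0 := by rw [two_smul]; exact h2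
    have := smul_eq_zero.mp h3
    rcases this with h | h
    · norm_num at h
    · exact h
  have huξ₁ : u ∈ ξ₁ := by rw [hu', hu₂0, add_zero]; exact hu₁
  -- support function equality for K₁
  have hsupp1 : ⟪y₁, u⟫ = suppFn K₁ u :=
    le_antisymm (inner_le_suppFn hK₁comp hy₁K u) (suppFn_le hK₁ne hA)
  -- uniqueness for the relative Gauss map
  have hzero₂ : ∀ w : E n, w ∈ ξ₁ → ∀ b ∈ K₂, ⟪b, w⟫ = 0 := by
    intro w hw b hb
    have hb' : b ∈ ξ₁ᗮ := by rw [← hperp]; exact hK₂ξ hb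
    have := (Submodule.mem_orthogonal ξ₁ b).1 hb' w hw
    rwa [real_inner_comm] at this
  have hrel : ∃! w : E n, w ∈ ξ₁ ∧ ‖w‖ = 1 ∧ ⟪y₁, w⟫ = suppFn K₁ w := by
    refine ⟨u, ⟨huξ₁, hu.1, hsupp1⟩, ?_⟩
    rintro w ⟨hwξ, hwn, hws⟩
    have hwsum : suppFn (K₁ + K₂) w = suppFn K₁ w := by
      apply le_antisymm
      · apply suppFn_le hsumne
        intro x hx
        obtain ⟨a, ha, b, hb, rfl⟩ := mem_add.mp hx
        rw [inner_add_left, hzero₂ w hwξ b hb, add_zero]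
        exact inner_le_suppFn hK₁comp ha w
      · calc suppFn K₁ w = ⟪y₁, w⟫ := hws.symm
          _ = ⟪y₁ + y₂, w⟫ := by rw [inner_add_left, hzero₂ w hwξ y₂ hy₂K, add_zero]
          _ ≤ suppFn (K₁ + K₂) w := inner_le_suppFn hsumcomp hsum_mem w
    apply huu
    refine ⟨hwn, ?_⟩
    rw [inner_add_left, hzero₂ w hwξ y₂ hy₂K, add_zero, hws, hwsum]
  have hgauss : gaussMap (K₁ + K₂) (y₁ + y₂) = u := by
    unfold gaussMap
    rw [dif_pos huniq]
  have hrelg : relGaussMap ξ₁ K₁ y₁ = u := by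
    unfold relGaussMap
    rw [dif_pos hrel]
    exact (hrel.choose_spec.2 u ⟨huξ₁, hu.1, hsupp1⟩).symm
  rw [hgauss, hrelg]
  exact ⟨huξ₁, rfl⟩
end
end

section
/- Fix n ≥ 1 and suppose that for all o-symmetric convex bodies K, L in ℝⁿ the logarithmic Minkowski inequality (1/V(K)) ∫_{S^{n-1}} log(h_L/h_K) dV_K ≥ (1/n) log(V(L)/V(K)) holds, with equality if and only if K and L are dilatates or relative cylinders. Then the cone-volume measure determines the body up to cylinders: if K, L are o-symmetric convex bodies with V_K = V_L, then K = L or K and L are relative cylinders. -/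
noncomputable section

open MeasureTheory Set Metric
open scoped RealInnerProductSpace ENNReal Pointwise Classical

/-- The cone-volume measure of `K`: `V_K(ω) = (1/n) ∫_{ν_K⁻¹(ω)} x ⬝ ν_K(x) dH^{n-1}(x)`. -/
def coneVolMeasure {n : ℕ} (K : Set (E n)) : Measure (E n) :=
  ((n : ℝ≥0∞))⁻¹ • Measure.map (gaussMap K)
    (((μH[(n : ℝ) - 1]).restrict (frontier K)).withDensity fun x =>
      ENNReal.ofReal ⟪x, gaussMap K x⟫)

/-- `K` and `L` are relative cylinders: both are cylinders `K = ΣKᵢ`, `L = ΣLᵢ` over the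
same decomposition (each summand of dimension at least 1, dimensions summing to `n`),
with `Lᵢ` a dilatate of `Kᵢ` for each `i`. -/
def IsRelativeCylinder {n : ℕ} (K L : Set (E n)) : Prop :=
  ∃ (m : ℕ) (Ks Ls : Fin m → Set (E n)),
    1 < m ∧
    (∀ i, Convex ℝ (Ks i)) ∧ (∀ i, Convex ℝ (Ls i)) ∧
    (∀ i, 1 ≤ Module.finrank ℝ (affineSpan ℝ (Ks i)).direction) ∧
    (∑ i, Module.finrank ℝ (affineSpan ℝ (Ks i)).direction) = n ∧
    K = ∑ i, Ks i ∧ L = ∑ i, Ls i ∧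
    ∀ i, ∃ c : ℝ, 0 < c ∧ Ls i = c • Ks i

lemma gaussMap_eq_zero_or_norm {n : ℕ} (K : Set (E n)) (x : E n) :
    gaussMap K x = 0 ∨ ‖gaussMap K x‖ = 1 := by
  unfold gaussMap
  split
  · next h => exact Or.inr h.choose_spec.1.1
  · exact Or.inl rfl

/-- The cone-volume measure is concentrated on unit vectors. -/
lemma coneVol_ae_norm {n : ℕ} (K : Set (E n)) :
    ∀ᵐ u ∂coneVolMeasure K, ‖u‖ = 1 := by
  set f : E n → ℝ≥0∞ := fun x => ENNReal.ofReal ⟪x, gaussMap K x⟫ with hf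
  set μ : Measure (E n) := (μH[(n : ℝ) - 1]).restrict (frontier K) with hμ
  set ν : Measure (E n) := μ.withDensity f with hν
  have hB : MeasurableSet {u : E n | ¬ ‖u‖ = 1} := by
    have h1 : MeasurableSet {u : E n | ‖u‖ = 1} :=
      measurable_norm (measurableSet_singleton (1 : ℝ))
    exact h1.compl
  rw [ae_iff]
  show ((n : ℝ≥0∞)⁻¹ • Measure.map (gaussMap K) ν) {u : E n | ¬ ‖u‖ = 1} = 0
  rw [Measure.smul_apply, smul_eq_mul]
  suffices h : Measure.map (gaussMap K) ν {u : E n | ¬ ‖u‖ = 1} = 0 by rw [h, mul_zero]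
  by_cases hg : AEMeasurable (gaussMap K) ν
  · rw [Measure.map_congr hg.ae_eq_mk,
      Measure.map_apply hg.measurable_mk hB]
    set T : Set (E n) := hg.mk (gaussMap K) ⁻¹' {u : E n | ¬ ‖u‖ = 1} with hT
    have hTm : MeasurableSet T := hg.measurable_mk hB
    set N : Set (E n) := {x | ¬ gaussMap K x = hg.mk (gaussMap K) x} with hN
    have hNnull : ν N = 0 := ae_iff.mp hg.ae_eq_mk
    set N' : Set (E n) := toMeasurable ν N with hN'
    have hN'm : MeasurableSet N' := measurableSet_toMeasurable ν N
    have hN'null : ν N' = 0 := by rw [hN', measure_toMeasurable]; exact hNnull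
    have hsub : T ⊆ (T \ N') ∪ N' := by
      intro x hx
      by_cases h : x ∈ N'
      · exact Or.inr h
      · exact Or.inl ⟨hx, h⟩
    refine le_antisymm ?_ zero_le
    calc ν T ≤ ν ((T \ N') ∪ N') := measure_mono hsub
      _ ≤ ν (T \ N') + ν N' := measure_union_le _ _
      _ = 0 := by
          rw [hN'null, add_zero, hν, withDensity_apply f (hTm.diff hN'm)]
          have hzero : ∀ x ∈ T \ N', f x = 0 := by
            intro x hx
            have hxn : gaussMap K x = hg.mk (gaussMap K) x := by
              by_contra hc
              exact hx.2 (subset_toMeasurable ν N hc)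
            have hxb : ¬ ‖gaussMap K x‖ = 1 := by
              have := hx.1
              rw [hT, mem_preimage, ← hxn] at this
              exact this
            have : gaussMap K x = 0 :=
              (gaussMap_eq_zero_or_norm K x).resolve_right hxb
            rw [hf]
            simp [this]
          rw [setLIntegral_congr_fun (g := fun _ => 0) (hTm.diff hN'm) hzero,
            lintegral_zero]
  · rw [Measure.map_of_not_aemeasurable hg]
    rfl

lemma suppFn_smul {n : ℕ} {t : ℝ} (ht : 0 ≤ t) (L : Set (E n)) (u : E n) :
    suppFn (t • L) u = t * suppFn L u := by
  unfold suppFn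
  have him : (fun y => ⟪y, u⟫) '' (t • L) = t • ((fun y => ⟪y, u⟫) '' L) := by
    ext r
    constructor
    · rintro ⟨y, ⟨z, hz, rfl⟩, rfl⟩
      exact ⟨⟪z, u⟫, ⟨z, hz, rfl⟩, (real_inner_smul_left z u t).symm⟩
    · rintro ⟨s, ⟨z, hz, rfl⟩, rfl⟩
      exact ⟨t • z, ⟨z, hz, rfl⟩, real_inner_smul_left z u t⟩
  rw [him, Real.sSup_smul_of_nonneg ht, smul_eq_mul]

lemma suppFn_pos {n : ℕ} {K : Set (E n)} (hK : IsCompact K)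
    (h0 : (0 : E n) ∈ interior K) {u : E n} (hu : ‖u‖ = 1) : 0 < suppFn K u := by
  obtain ⟨ε, hε, hball⟩ := Metric.isOpen_iff.mp isOpen_interior 0 h0
  have hy : (ε / 2) • u ∈ K := by
    apply interior_subset
    apply hball
    rw [mem_ball, dist_zero_right, norm_smul, hu, mul_one, Real.norm_eq_abs,
      abs_of_pos (by linarith)]
    linarith
  have hbdd : BddAbove ((fun y => ⟪y, u⟫) '' K) :=
    (hK.image (continuous_id.inner continuous_const)).bddAbove
  have hle : ⟪(ε / 2) • u, u⟫ ≤ suppFn K u := le_csSup hbdd (mem_image_of_mem _ hy)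
  have : ⟪(ε / 2) • u, u⟫ = ε / 2 := by
    rw [real_inner_smul_left, real_inner_self_eq_norm_sq, hu]
    ring
  rw [this] at hle
  linarith

lemma vol_smul {n : ℕ} {t : ℝ} (ht : 0 ≤ t) (K : Set (E n)) :
    (volume (t • K)).toReal = t ^ n * (volume K).toReal := by
  rw [Measure.addHaar_smul_of_nonneg volume ht K, ENNReal.toReal_mul,
    ENNReal.toReal_ofReal (pow_nonneg ht _), finrank_euclideanSpace_fin]

/-- If the logarithmic Minkowski inequality (with its equality cases) holds for all
`o`-symmetric convex bodies in `ℝⁿ`, then the cone-volume measure determines the body up to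
relative cylinders. -/
theorem stmt17 {n : ℕ} (hn : 1 ≤ n)
    (H : ∀ K L : Set (E n),
      Convex ℝ K → IsCompact K → (0 : E n) ∈ interior K → K = -K →
      Convex ℝ L → IsCompact L → (0 : E n) ∈ interior L → L = -L →
      (volume K).toReal⁻¹ * (∫ u, Real.log (suppFn L u / suppFn K u) ∂coneVolMeasure K) ≥
          (n : ℝ)⁻¹ * Real.log ((volume L).toReal / (volume K).toReal) ∧
        ((volume K).toReal⁻¹ * (∫ u, Real.log (suppFn L u / suppFn K u) ∂coneVolMeasure K) =
            (n : ℝ)⁻¹ * Real.log ((volume L).toReal / (volume K).toReal) ↔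
          (∃ c : ℝ, 0 < c ∧ L = c • K) ∨ IsRelativeCylinder K L)) :
    ∀ K L : Set (E n),
      Convex ℝ K → IsCompact K → (0 : E n) ∈ interior K → K = -K →
      Convex ℝ L → IsCompact L → (0 : E n) ∈ interior L → L = -L →
      coneVolMeasure K = coneVolMeasure L →
      K = L ∨ IsRelativeCylinder K L := by
  intro K L hKc hKcp hK0 hKs hLc hLcp hL0 hLs hV
  have hn0 : (n : ℝ) ≠ 0 := Nat.cast_ne_zero.mpr (by omega)
  have hvolpos : ∀ M : Set (E n), IsCompact M → (0 : E n) ∈ interior M →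
      0 < (volume M).toReal := by
    intro M hcp h0
    exact ENNReal.toReal_pos (Measure.measure_pos_of_nonempty_interior volume ⟨0, h0⟩).ne'
      hcp.measure_lt_top.ne
  have hVK := hvolpos K hKcp hK0
  have hVL := hvolpos L hLcp hL0
  -- total mass of the cone-volume measure equals the volume
  have mass : ∀ M : Set (E n), Convex ℝ M → IsCompact M → (0 : E n) ∈ interior M →
      M = -M → (coneVolMeasure M Set.univ).toReal = (volume M).toReal := by
    intro M hc hcp h0 hs
    have hv := hvolpos M hcp h0
    have key : ∀ t : ℝ, 0 < t →
        (volume M).toReal⁻¹ * ((coneVolMeasure M Set.univ).toReal * Real.log t) ≥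
          Real.log t := by
      intro t ht
      have htc : Convex ℝ (t • M) := hc.smul t
      have htcp : IsCompact (t • M) := hcp.smul t
      have ht0 : (0 : E n) ∈ interior (t • M) := by
        rw [interior_smul₀ ht.ne' M]
        exact ⟨0, h0, smul_zero t⟩
      have hts : t • M = -(t • M) := by
        rw [← Set.smul_set_neg, ← hs]
      have hIneq := (H M (t • M) hc hcp h0 hs htc htcp ht0 hts).1
      have hint : (∫ u, Real.log (suppFn (t • M) u / suppFn M u) ∂coneVolMeasure M) =
          (coneVolMeasure M Set.univ).toReal * Real.log t := by
        rw [integral_congr_ae ((coneVol_ae_norm M).mono fun u hu => ?_), integral_const,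
          smul_eq_mul]
        rfl
        have hpos := suppFn_pos hcp h0 hu
        rw [suppFn_smul ht.le M u, mul_div_assoc, div_self hpos.ne', mul_one]
      have hrhs : (n : ℝ)⁻¹ * Real.log ((volume (t • M)).toReal / (volume M).toReal) =
          Real.log t := by
        rw [vol_smul ht.le M, mul_div_assoc, div_self hv.ne', mul_one, Real.log_pow]
        field_simp
      rw [hint, hrhs] at hIneq
      exact hIneq
    have h1 := key (Real.exp 1) (Real.exp_pos 1)
    have h2 := key (Real.exp (-1)) (Real.exp_pos (-1))
    rw [Real.log_exp] at h1 h2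
    rw [mul_one] at h1
    rw [mul_neg_one, mul_neg] at h2
    have hone : (volume M).toReal⁻¹ * (coneVolMeasure M Set.univ).toReal = 1 :=
      le_antisymm (by linarith) h1
    rwa [inv_mul_eq_div, div_eq_one_iff_eq hv.ne'] at hone
  have hmass : (volume K).toReal = (volume L).toReal := by
    rw [← mass K hKc hKcp hK0 hKs, ← mass L hLc hLcp hL0 hLs, hV]
  set I := ∫ u, Real.log (suppFn L u / suppFn K u) ∂coneVolMeasure K with hI
  have hzero : Real.log ((volume L).toReal / (volume K).toReal) = 0 := by
    rw [hmass, div_self hVL.ne', Real.log_one]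
  have hzero' : Real.log ((volume K).toReal / (volume L).toReal) = 0 := by
    rw [hmass, div_self hVL.ne', Real.log_one]
  have hJ : (∫ u, Real.log (suppFn K u / suppFn L u) ∂coneVolMeasure L) = -I := by
    rw [← hV, hI, ← integral_neg]
    apply integral_congr_ae
    apply ae_of_all
    intro u
    show Real.log (suppFn K u / suppFn L u) = - Real.log (suppFn L u / suppFn K u)
    rw [← Real.log_inv, inv_div]
  have e1 := (H K L hKc hKcp hK0 hKs hLc hLcp hL0 hLs).1
  have e2 := (H L K hLc hLcp hL0 hLs hKc hKcp hK0 hKs).1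
  rw [hzero, mul_zero, ← hI] at e1
  rw [hzero', mul_zero, hJ] at e2
  have hI0 : I = 0 := by
    have h1 : 0 ≤ I := by
      by_contra h
      push_neg at h
      nlinarith [inv_pos.mpr hVK]
    have h2 : I ≤ 0 := by
      by_contra h
      push_neg at h
      nlinarith [inv_pos.mpr hVL]
    linarith
  have heq : (volume K).toReal⁻¹ * I =
      (n : ℝ)⁻¹ * Real.log ((volume L).toReal / (volume K).toReal) := by
    rw [hI0, hzero, mul_zero, mul_zero]
  rcases ((H K L hKc hKcp hK0 hKs hLc hLcp hL0 hLs).2).mp (by rw [← hI]; exact heq) with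
    ⟨c, hc, hcL⟩ | hcyl
  · left
    have hvol : (volume L).toReal = c ^ n * (volume K).toReal := by
      rw [hcL]; exact vol_smul hc.le K
    have hcn : c ^ n = 1 := by
      rw [hmass] at hvol
      have := hVL.ne'
      field_simp at hvol
      nlinarith [hVL]
    have hc1 : c = 1 := by
      rcases lt_trichotomy c 1 with h | h | h
      · exfalso
        have : c ^ n < 1 := pow_lt_one₀ hc.le h (by omega)
        linarith
      · exact h
      · exfalso
        have : 1 < c ^ n := one_lt_pow₀ h (by omega)
        linarith
    rw [hcL, hc1, one_smul]
  · right
    exact hcyl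
end
end
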